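/- For every h with 0 < h ≤ 1 the following hold: (i) the leading coefficient p = 1 − e^{2h} + 2he^h of the polynomial P_2 is negative; (ii) the discriminant expression h²(e^h+1)² + 2h(1 − e^{2h}) is positive; (iii) the number λ_1 = ( h(e^{2h}+1) − e^{2h} + 1 − (e^h − 1)·√( h²(e^h+1)² + 2h(1 − e^{2h}) ) ) / (1 − e^{2h} + 2he^h) is a root of P_2, i.e. P_2(λ_1) = 0; and (iv) 0 < |λ_1| < e^{−h}, so in particular |λ_1| < 1 and |λ_1| e^h < 1. -/

import Mathlib

section Aux

private lemma aux_L (h : ℝ) (hh : 0 ≤ h) :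
    1+h+h^2/2+h^3/6+h^4/24 ≤ Real.exp h := by
  have := Real.sum_le_exp_of_nonneg hh 5
  simp [Finset.sum_range_succ, Nat.factorial] at this
  linarith

private lemma aux_U (h : ℝ) (hh : 0 ≤ h) (hh1 : h ≤ 1) :
    Real.exp h ≤ 1+h+h^2/2+h^3/6+5/96*h^4 := by
  have := Real.exp_bound' hh hh1 (n:=4) (by norm_num)
  simp [Finset.sum_range_succ, Nat.factorial] at this
  linarith

private lemma aux_p (h E : ℝ) (hh : 0 < h)
    (hL : 1+h+h^2/2+h^3/6+h^4/24 ≤ E) :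
    1 - E^2 + 2*h*E < 0 := by
  nlinarith [pow_pos hh 3, pow_pos hh 4, sq_nonneg h, mul_pos hh hh]

private lemma aux_g (h E : ℝ) (hh : 0 < h) (hh1 : h ≤ 1)
    (hL : 1+h+h^2/2+h^3/6+h^4/24 ≤ E)
    (hU : E ≤ 1+h+h^2/2+h^3/6+5/96*h^4) :
    0 < h*(E+1) - 2*(E-1) := by
  nlinarith [pow_pos hh 3, pow_pos hh 4, pow_pos hh 5]

private lemma aux_E1 (h E : ℝ) (hh : 0 < h)
    (hL : 1+h+h^2/2+h^3/6+h^4/24 ≤ E) : 1 < E := by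
  nlinarith [pow_pos hh 3, pow_pos hh 4]

private lemma aux_A (h E : ℝ) (hh : 0 < h) (hh1 : h ≤ 1) (hE0 : 0 ≤ E)
    (hL : 1+h+h^2/2+h^3/6+h^4/24 ≤ E)
    (hU : E ≤ 1+h+h^2/2+h^3/6+5/96*h^4) :
    0 < h*(E^2+1) - E^2 + 1 := by
  nlinarith [pow_pos hh 3, pow_pos hh 4, sq_nonneg (E-1), mul_pos hh hh,
    mul_le_mul hU hU hE0 (by positivity)]

private lemma aux_M (h E : ℝ) (hh : 0 < h) (hh1 : h ≤ 1) (hE0 : 0 ≤ E)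
    (hL : 1+h+h^2/2+h^3/6+h^4/24 ≤ E)
    (hU : E ≤ 1+h+h^2/2+h^3/6+5/96*h^4) :
    0 < 4*h*E*(E^2+1) - (E^2-1)*(E+1)^2 := by
  have hLpos : (0:ℝ) ≤ 1+h+h^2/2+h^3/6+h^4/24 := by positivity
  have hE3L : (1+h+h^2/2+h^3/6+h^4/24)^3 ≤ E^3 := pow_le_pow_left₀ hLpos hL 3
  have hE4U : E^4 ≤ (1+h+h^2/2+h^3/6+5/96*h^4)^4 := pow_le_pow_left₀ hE0 hU 4
  have hE3U : E^3 ≤ (1+h+h^2/2+h^3/6+5/96*h^4)^3 := pow_le_pow_left₀ hE0 hU 3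
  have hk : ∀ k : ℕ, 4 ≤ k → h^k ≤ h^4 := fun k hk =>
    pow_le_pow_of_le_one hh.le hh1 hk
  have hf : 4*h*E*(E^2+1) - (E^2-1)*(E+1)^2
      = 4*h*E^3 + 4*h*E - E^4 - 2*E^3 + 2*E + 1 := by ring
  rw [hf]
  have hmul1 : h*(1+h+h^2/2+h^3/6+h^4/24)^3 ≤ h*E^3 :=
    mul_le_mul_of_nonneg_left hE3L hh.le
  have hmul2 : h*(1+h+h^2/2+h^3/6+h^4/24) ≤ h*E :=
    mul_le_mul_of_nonneg_left hL hh.le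
  nlinarith [hk 5 (by norm_num), hk 6 (by norm_num), hk 7 (by norm_num),
    hk 8 (by norm_num), hk 9 (by norm_num), hk 10 (by norm_num),
    hk 11 (by norm_num), hk 12 (by norm_num), hk 13 (by norm_num),
    hk 14 (by norm_num), hk 15 (by norm_num), hk 16 (by norm_num),
    pow_pos hh 3, pow_pos hh 4, hmul1, hmul2, hE4U, hE3U, hL]

private lemma aux_sqlt (A p X : ℝ) (hA : 0 < A) (hX : 0 ≤ X)
    (hsq : X^2 = A^2 - p^2) (hp2 : 0 < p^2) : X < A := by
  nlinarith

private lemma aux_sqlt2 (Y X C : ℝ) (hC : 0 < C) (hX : 0 ≤ X)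
    (hd : X^2 - Y^2 = C) : Y < X := by
  nlinarith

end Aux

/-- The polynomial `P₂(λ) = (1−e^{2h})(1−λ)² − 2h(λ(e^{2h}+1) − e^h(λ²+1))`, the
polynomial `P_{2m−2}` of the construction of the discrete analogue of
`d⁴/dx⁴ − d²/dx²` for `m = 2`. -/
noncomputable def P2 (h lam : ℝ) : ℝ :=
  (1 - Real.exp (2 * h)) * (1 - lam) ^ 2
    - 2 * h * (lam * (Real.exp (2 * h) + 1) - Real.exp h * (lam ^ 2 + 1))

/-- The root `λ₁` of `P₂` of absolute value less than `1`. -/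
noncomputable def lam1 (h : ℝ) : ℝ :=
  (h * (Real.exp (2 * h) + 1) - Real.exp (2 * h) + 1
      - (Real.exp h - 1) *
          Real.sqrt (h ^ 2 * (Real.exp h + 1) ^ 2 + 2 * h * (1 - Real.exp (2 * h)))) /
    (1 - Real.exp (2 * h) + 2 * h * Real.exp h)

set_option maxHeartbeats 2000000 in
/-- For every `0 < h ≤ 1`: (i) the leading coefficient `p = 1 − e^{2h} + 2he^h` of `P₂`
is negative; (ii) the discriminant expression `h²(e^h+1)² + 2h(1−e^{2h})` is positive;
(iii) `λ₁` is a root of `P₂`; (iv) `0 < |λ₁| < e^{−h}`, so in particular `|λ₁| < 1` and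
`|λ₁|e^h < 1`. -/
theorem lam1_properties (h : ℝ) (hh : 0 < h) (hh1 : h ≤ 1) :
    (1 - Real.exp (2 * h) + 2 * h * Real.exp h < 0) ∧
    (0 < h ^ 2 * (Real.exp h + 1) ^ 2 + 2 * h * (1 - Real.exp (2 * h))) ∧
    P2 h (lam1 h) = 0 ∧
    (0 < |lam1 h| ∧ |lam1 h| < Real.exp (-h)) ∧
    |lam1 h| < 1 ∧ |lam1 h| * Real.exp h < 1 := by
  obtain ⟨E, hE⟩ : ∃ E, Real.exp h = E := ⟨_, rfl⟩
  have hEpos : 0 < E := hE ▸ Real.exp_pos h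
  have hexp2 : Real.exp (2 * h) = E ^ 2 := by
    rw [two_mul, Real.exp_add, hE, sq]
  have hL : 1+h+h^2/2+h^3/6+h^4/24 ≤ E := hE ▸ aux_L h hh.le
  have hU : E ≤ 1+h+h^2/2+h^3/6+5/96*h^4 := hE ▸ aux_U h hh.le hh1
  have hE1 : 1 < E := aux_E1 h E hh hL
  have hp : 1 - E^2 + 2*h*E < 0 := aux_p h E hh hL
  have hpne : 1 - E^2 + 2*h*E ≠ 0 := ne_of_lt hp
  have hg : 0 < h*(E+1) - 2*(E-1) := aux_g h E hh hh1 hL hU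
  have hD : 0 < h^2*(E+1)^2 + 2*h*(1-E^2) := by
    have hfac : h^2*(E+1)^2 + 2*h*(1-E^2) = (h*(E+1)) * (h*(E+1) - 2*(E-1)) := by
      ring
    rw [hfac]
    exact mul_pos (by positivity) hg
  have hDrw : h ^ 2 * (Real.exp h + 1) ^ 2 + 2 * h * (1 - Real.exp (2 * h))
      = h^2*(E+1)^2 + 2*h*(1-E^2) := by rw [hexp2, hE]
  -- the square root
  obtain ⟨s, hsdef⟩ : ∃ s, Real.sqrt (h^2*(E+1)^2 + 2*h*(1-E^2)) = s := ⟨_, rfl⟩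
  have hs0 : 0 ≤ s := hsdef ▸ Real.sqrt_nonneg _
  have hs : s^2 = h^2*(E+1)^2 + 2*h*(1-E^2) := by
    rw [← hsdef]; exact Real.sq_sqrt hD.le
  have hlamrw : lam1 h = (h*(E^2+1) - E^2 + 1 - (E-1)*s) / (1 - E^2 + 2*h*E) := by
    rw [lam1, hexp2, hE, hsdef]
  -- numerator positivity
  have hA : 0 < h*(E^2+1) - E^2 + 1 := aux_A h E hh hh1 hEpos.le hL hU
  have hsqid : ((E-1)*s)^2 = (h*(E^2+1) - E^2 + 1)^2 - (1 - E^2 + 2*h*E)^2 := by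
    rw [mul_pow, hs]; ring
  have hXnn : 0 ≤ (E-1)*s := mul_nonneg (by linarith) hs0
  have hEs : (E-1)*s < h*(E^2+1) - E^2 + 1 :=
    aux_sqlt _ _ _ hA hXnn hsqid (by positivity)
  have hN : 0 < h*(E^2+1) - E^2 + 1 - (E-1)*s := by linarith
  -- (iii) root
  have hroot : P2 h (lam1 h) = 0 := by
    rw [P2, hexp2, hE, hlamrw]
    have hcalc :
        (1 - E^2) * (1 - (h*(E^2+1) - E^2 + 1 - (E-1)*s) / (1 - E^2 + 2*h*E)) ^ 2
          - 2*h*(((h*(E^2+1) - E^2 + 1 - (E-1)*s) / (1 - E^2 + 2*h*E)) * (E^2+1)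
            - E*(((h*(E^2+1) - E^2 + 1 - (E-1)*s) / (1 - E^2 + 2*h*E))^2 + 1))
          = ((h*(E^2+1) - E^2 + 1 - (E-1)*s)^2
          + (-2*(1-E^2) - 2*h*(E^2+1))*(h*(E^2+1) - E^2 + 1 - (E-1)*s)
          + (1 - E^2 + 2*h*E)^2) / (1 - E^2 + 2*h*E) := by
        rw [eq_div_iff hpne]
        obtain ⟨x, hx⟩ : ∃ x, (h*(E^2+1) - E^2 + 1 - (E-1)*s) / (1 - E^2 + 2*h*E) = x :=
          ⟨_, rfl⟩
        have hNx : h*(E^2+1) - E^2 + 1 - (E-1)*s = x * (1 - E^2 + 2*h*E) := by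
          rw [← hx, div_mul_cancel₀ _ hpne]
        rw [hx, hNx]
        ring
    have hNq : (h*(E^2+1) - E^2 + 1 - (E-1)*s)^2
          + (-2*(1-E^2) - 2*h*(E^2+1))*(h*(E^2+1) - E^2 + 1 - (E-1)*s)
          + (1 - E^2 + 2*h*E)^2 = 0 := by
      linear_combination (E-1)^2 * hs
    rw [hcalc, hNq, zero_div]
  -- lam1 < 0
  have hlamneg : lam1 h < 0 := by
    rw [hlamrw]
    exact div_neg_of_pos_of_neg hN hp
  -- lam1 > -1/E
  have hM : 0 < 4*h*E*(E^2+1) - (E^2-1)*(E+1)^2 := aux_M h E hh hh1 hEpos.le hL hU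
  have hdiff : (E*((E-1)*s))^2
      - (E*(h*(E^2+1) - E^2 + 1) + (1 - E^2 + 2*h*E))^2
      = (-(1 - E^2 + 2*h*E)) * (4*h*E*(E^2+1) - (E^2-1)*(E+1)^2) := by
    rw [mul_pow, mul_pow, hs]; ring
  have hEXnn : 0 ≤ E*((E-1)*s) := mul_nonneg hEpos.le hXnn
  have hfin : E*(h*(E^2+1) - E^2 + 1) + (1 - E^2 + 2*h*E) < E*((E-1)*s) :=
    aux_sqlt2 _ _ _ (mul_pos (neg_pos.mpr hp) hM) hEXnn hdiff
  have hgt : -(1/E) < lam1 h := by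
    rw [hlamrw, lt_div_iff_of_neg hp]
    have h1 : (h*(E^2+1) - E^2 + 1 - (E-1)*s) * E < -(1 - E^2 + 2*h*E) := by
      nlinarith [hfin]
    have h2 : (h*(E^2+1) - E^2 + 1 - (E-1)*s) < (-(1 - E^2 + 2*h*E))/E :=
      (lt_div_iff₀ hEpos).mpr h1
    have h3 : -(1/E)*(1 - E^2 + 2*h*E) = (-(1 - E^2 + 2*h*E))/E := by
      field_simp
    linarith [h2, h3.ge, h3.le]
  -- conclusions
  have hEinv : Real.exp (-h) = 1/E := by rw [Real.exp_neg, hE, one_div]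
  have habs : |lam1 h| = -lam1 h := abs_of_neg hlamneg
  have hinv1 : 1/E < 1 := by
    rw [div_lt_one hEpos]; exact hE1
  have hprod1 : (1/E) * E = 1 := by field_simp
  refine ⟨by rw [hexp2, hE]; exact hp, by rw [hDrw]; exact hD, hroot,
    ⟨abs_pos.mpr hlamneg.ne, ?_⟩, ?_, ?_⟩
  · rw [habs, hEinv]; linarith
  · rw [habs]; linarith
  · rw [habs, hE]
    have h4 : -lam1 h < 1/E := by linarith
    have h5 : (-lam1 h) * E < (1/E) * E := mul_lt_mul_of_pos_right h4 hEpos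
    linarith
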